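/- Log-concavity of Delannoy numbers (Example 4.6, new enumerative result): for all integers n ≥ 2 and 1 ≤ k ≤ n−1, one has D(k, n−k)² ≥ D(k+1, n−k−1) · D(k−1, n−k+1). -/

import Mathlib

/-- The Delannoy number `D(a,b) = Σ_j C(a,j) C(b,j) 2^j`, the number of lattice paths
from `(0,0)` to `(a,b)` with steps `(1,0)`, `(0,1)` and `(1,1)`. -/
def delannoy (a b : ℕ) : ℕ :=
  ∑ j ∈ Finset.range (min a b + 1), a.choose j * b.choose j * 2 ^ j

lemma delannoy_eq_sum (a b N : ℕ) (h : min a b < N) :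
    delannoy a b = ∑ j ∈ Finset.range N, a.choose j * b.choose j * 2 ^ j := by
  apply Finset.sum_subset
  · rw [Finset.range_subset_range]; omega
  · intro j hj hj'
    simp only [Finset.mem_range, not_lt] at hj hj'
    rcases Nat.le_total a b with hab | hab
    · have ha : a < j := by omega
      simp [Nat.choose_eq_zero_of_lt ha]
    · have hb : b < j := by omega
      simp [Nat.choose_eq_zero_of_lt hb]

lemma delannoy_comm (a b : ℕ) : delannoy a b = delannoy b a := by
  unfold delannoy
  rw [min_comm]
  exact Finset.sum_congr rfl fun j _ => by ring

lemma delannoy_zero_right (a : ℕ) : delannoy a 0 = 1 := by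
  simp [delannoy]

lemma delannoy_rec (a b : ℕ) :
    delannoy (a + 1) (b + 1) = delannoy a (b + 1) + delannoy (a + 1) b + delannoy a b := by
  set M := min a b + 1 with hM
  set St := ∑ j ∈ Finset.range M, a.choose j * b.choose j * 2 ^ j with hSt
  set Su := ∑ j ∈ Finset.range M, a.choose j * b.choose (j + 1) * 2 ^ j with hSu
  set Sv := ∑ j ∈ Finset.range M, a.choose (j + 1) * b.choose j * 2 ^ j with hSv
  set Sw := ∑ j ∈ Finset.range M, a.choose (j + 1) * b.choose (j + 1) * 2 ^ j with hSw
  have hmin1 : min (a + 1) (b + 1) < M + 1 := by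
    rw [Nat.succ_min_succ]; omega
  have E1 : delannoy (a + 1) (b + 1) = 1 + (2 * St + 2 * Su + 2 * Sv + 2 * Sw) := by
    rw [delannoy_eq_sum (a + 1) (b + 1) (M + 1) hmin1, Finset.sum_range_succ']
    have h0 : (a+1).choose 0 * (b+1).choose 0 * 2 ^ 0 = 1 := by simp
    rw [h0]
    have hterm : ∀ j ∈ Finset.range M,
        (a+1).choose (j+1) * (b+1).choose (j+1) * 2 ^ (j+1) =
        2 * (a.choose j * b.choose j * 2 ^ j) + 2 * (a.choose j * b.choose (j+1) * 2 ^ j)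
          + 2 * (a.choose (j+1) * b.choose j * 2 ^ j)
          + 2 * (a.choose (j+1) * b.choose (j+1) * 2 ^ j) := by
      intro j _
      rw [Nat.choose_succ_succ a j, Nat.choose_succ_succ b j, pow_succ]
      ring
    rw [Finset.sum_congr rfl hterm]
    simp only [Finset.sum_add_distrib, ← Finset.mul_sum, ← hSt, ← hSu, ← hSv, ← hSw]
    ring
  have E2 : delannoy a (b + 1) = 1 + (2 * Sv + 2 * Sw) := by
    have hm : min a (b + 1) < M + 1 := by
      have := min_le_min (Nat.le_succ a) (le_refl (b + 1))
      rw [Nat.succ_min_succ] at this; omega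
    rw [delannoy_eq_sum a (b + 1) (M + 1) hm, Finset.sum_range_succ']
    have h0 : a.choose 0 * (b+1).choose 0 * 2 ^ 0 = 1 := by simp
    rw [h0]
    have hterm : ∀ j ∈ Finset.range M,
        a.choose (j+1) * (b+1).choose (j+1) * 2 ^ (j+1) =
        2 * (a.choose (j+1) * b.choose j * 2 ^ j)
          + 2 * (a.choose (j+1) * b.choose (j+1) * 2 ^ j) := by
      intro j _
      rw [Nat.choose_succ_succ b j, pow_succ]
      ring
    rw [Finset.sum_congr rfl hterm]
    simp only [Finset.sum_add_distrib, ← Finset.mul_sum, ← hSv, ← hSw]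
    ring
  have E3 : delannoy (a + 1) b = 1 + (2 * Su + 2 * Sw) := by
    have hm : min (a + 1) b < M + 1 := by
      have := min_le_min (le_refl (a + 1)) (Nat.le_succ b)
      rw [Nat.succ_min_succ] at this; omega
    rw [delannoy_eq_sum (a + 1) b (M + 1) hm, Finset.sum_range_succ']
    have h0 : (a+1).choose 0 * b.choose 0 * 2 ^ 0 = 1 := by simp
    rw [h0]
    have hterm : ∀ j ∈ Finset.range M,
        (a+1).choose (j+1) * b.choose (j+1) * 2 ^ (j+1) =
        2 * (a.choose j * b.choose (j+1) * 2 ^ j)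
          + 2 * (a.choose (j+1) * b.choose (j+1) * 2 ^ j) := by
      intro j _
      rw [Nat.choose_succ_succ a j, pow_succ]
      ring
    rw [Finset.sum_congr rfl hterm]
    simp only [Finset.sum_add_distrib, ← Finset.mul_sum, ← hSu, ← hSw]
    ring
  have E4 : delannoy a b = 1 + 2 * Sw := by
    rw [delannoy_eq_sum a b (M + 1) (by omega), Finset.sum_range_succ']
    have h0 : a.choose 0 * b.choose 0 * 2 ^ 0 = 1 := by simp
    rw [h0]
    have hterm : ∀ j ∈ Finset.range M,
        a.choose (j+1) * b.choose (j+1) * 2 ^ (j+1) =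
        2 * (a.choose (j+1) * b.choose (j+1) * 2 ^ j) := by
      intro j _
      rw [pow_succ]; ring
    rw [Finset.sum_congr rfl hterm]
    rw [← Finset.mul_sum, ← hSw]
    ring
  have E5 : delannoy a b = St := delannoy_eq_sum a b M (by omega)
  omega

lemma delannoy_mono (r d : ℕ) : delannoy r d ≤ delannoy (r + 1) d := by
  cases d with
  | zero => simp [delannoy_zero_right]
  | succ f =>
      rw [delannoy_rec r f]
      omega

/-- The master inequality: moving a SE/NW pair of points one step apart along the
first coordinate decreases the product of Delannoy numbers. -/
lemma delannoy_star : ∀ s a b r d : ℕ, a + b + r + d ≤ s → r ≤ a → b ≤ d →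
    delannoy (a + 1) b * delannoy r d ≤ delannoy a b * delannoy (r + 1) d := by
  intro s
  induction s with
  | zero =>
      intro a b r d hs hra hbd
      have ha : a = 0 := by omega
      have hb : b = 0 := by omega
      have hr : r = 0 := by omega
      have hd : d = 0 := by omega
      subst ha; subst hb; subst hr; subst hd
      rw [mul_comm]
  | succ s ih =>
      intro a b r d hs hra hbd
      cases b with
      | zero =>
          rw [delannoy_zero_right, delannoy_zero_right, one_mul, one_mul]
          exact delannoy_mono r d
      | succ e =>
          obtain ⟨f, rfl⟩ : ∃ f, d = f + 1 := ⟨d - 1, by omega⟩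
          have hef : e ≤ f := by omega
          rcases eq_or_lt_of_le hra with hra' | hra'
          · -- r = a
            subst hra'
            by_cases hbd' : e = f
            · subst hbd'
              rw [mul_comm]
            · have hef' : e + 1 ≤ f := by omega
              -- expand both (r+1) factors
              rw [delannoy_rec r e, delannoy_rec r f]
              -- goal: (X + Y + Z) * W ≤ X * (W + U + V)
              -- X = D r (e+1), Y = D (r+1) e, Z = D r e
              -- W = D r (f+1), U = D (r+1) f, V = D r f
              have hT1 : delannoy r e * delannoy r (f + 1) ≤
                  delannoy r (e + 1) * delannoy r f := by
                have h := ih f r e r (by omega) hef le_rfl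
                rw [delannoy_comm (f + 1) r, delannoy_comm e r, delannoy_comm f r,
                  delannoy_comm (e + 1) r] at h
                calc delannoy r e * delannoy r (f + 1)
                    = delannoy r (f + 1) * delannoy r e := mul_comm _ _
                  _ ≤ delannoy r f * delannoy r (e + 1) := h
                  _ = delannoy r (e + 1) * delannoy r f := mul_comm _ _
              have hT2 : delannoy (r + 1) e * delannoy r (f + 1) ≤
                  delannoy r (e + 1) * delannoy (r + 1) f := by
                have hA := ih f r e (r + 1) (by omega) hef (Nat.le_succ r)
                rw [delannoy_comm (f + 1) r, delannoy_comm e (r + 1), delannoy_comm f r,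
                  delannoy_comm (e + 1) (r + 1)] at hA
                -- hA : D r (f+1) * D (r+1) e ≤ D r f * D (r+1) (e+1)
                have hB := ih r (e + 1) r f (by omega) le_rfl hef'
                -- hB : D (r+1) (e+1) * D r f ≤ D r (e+1) * D (r+1) f
                calc delannoy (r + 1) e * delannoy r (f + 1)
                    = delannoy r (f + 1) * delannoy (r + 1) e := mul_comm _ _
                  _ ≤ delannoy r f * delannoy (r + 1) (e + 1) := hA
                  _ = delannoy (r + 1) (e + 1) * delannoy r f := mul_comm _ _
                  _ ≤ delannoy r (e + 1) * delannoy (r + 1) f := hB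
              nlinarith [hT1, hT2]
          · -- r < a
            rw [delannoy_rec a e, delannoy_rec r f]
            have hT1 : delannoy a e * delannoy r (f + 1) ≤
                delannoy a (e + 1) * delannoy r f := by
              have h := ih f r e a (by omega) hef hra
              rw [delannoy_comm (f + 1) r, delannoy_comm e a, delannoy_comm f r,
                delannoy_comm (e + 1) a] at h
              calc delannoy a e * delannoy r (f + 1)
                  = delannoy r (f + 1) * delannoy a e := mul_comm _ _
                _ ≤ delannoy r f * delannoy a (e + 1) := h
                _ = delannoy a (e + 1) * delannoy r f := mul_comm _ _
            have hT2 : delannoy (a + 1) e * delannoy r (f + 1) ≤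
                delannoy a (e + 1) * delannoy (r + 1) f := by
              have h1 := ih a e r (f + 1) (by omega) hra (by omega)
              -- h1 : D (a+1) e * D r (f+1) ≤ D a e * D (r+1) (f+1)
              have h2 := ih f (r + 1) e a (by omega) hef (by omega)
              rw [delannoy_comm (f + 1) (r + 1), delannoy_comm e a, delannoy_comm f (r + 1),
                delannoy_comm (e + 1) a] at h2
              -- h2 : D (r+1) (f+1) * D a e ≤ D (r+1) f * D a (e+1)
              calc delannoy (a + 1) e * delannoy r (f + 1)
                  ≤ delannoy a e * delannoy (r + 1) (f + 1) := h1
                _ = delannoy (r + 1) (f + 1) * delannoy a e := mul_comm _ _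
                _ ≤ delannoy (r + 1) f * delannoy a (e + 1) := h2
                _ = delannoy a (e + 1) * delannoy (r + 1) f := mul_comm _ _
            nlinarith [hT1, hT2]

/-- Example 4.6: log-concavity of Delannoy numbers. -/
theorem delannoy_log_concave (n k : ℕ) (hn : 2 ≤ n) (hk1 : 1 ≤ k) (hk2 : k ≤ n - 1) :
    delannoy (k + 1) (n - k - 1) * delannoy (k - 1) (n - k + 1) ≤ delannoy k (n - k) ^ 2 := by
  obtain ⟨e, rfl⟩ : ∃ e, k = e + 1 := ⟨k - 1, by omega⟩
  obtain ⟨f, hf⟩ : ∃ f, n - (e + 1) = f + 1 := ⟨n - (e + 1) - 1, by omega⟩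
  have h1 : n - (e + 1) - 1 = f := by omega
  have h2 : n - (e + 1) + 1 = f + 2 := by omega
  rw [hf]
  simp only [Nat.add_sub_cancel]
  -- goal: delannoy (e+2) f * delannoy e (f+2) ≤ delannoy (e+1) (f+1) ^ 2
  have hA := delannoy_star (e + 1 + f + e + (f + 2)) (e + 1) f e (f + 2) le_rfl
    (Nat.le_succ e) (by omega)
  -- hA : D (e+2) f * D e (f+2) ≤ D (e+1) f * D (e+1) (f+2)
  have hB := delannoy_star (f + 1 + (e + 1) + f + (e + 1)) (f + 1) (e + 1) f (e + 1) le_rfl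
    (Nat.le_succ f) le_rfl
  rw [delannoy_comm (f + 1 + 1) (e + 1), delannoy_comm f (e + 1),
    delannoy_comm (f + 1) (e + 1)] at hB
  -- hB : D (e+1) (f+2) * D f (e+1)?? need care
  calc delannoy (e + 1 + 1) f * delannoy e (f + 2)
      ≤ delannoy (e + 1) f * delannoy (e + 1) (f + 2) := hA
    _ = delannoy (e + 1) (f + 2) * delannoy (e + 1) f := mul_comm _ _
    _ ≤ delannoy (e + 1) (f + 1) * delannoy (e + 1) (f + 1) := hB
    _ = delannoy (e + 1) (f + 1) ^ 2 := (sq _).symm
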